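/- Let (u,v) ∈ 𝔥_α \ {(0,0)}. If G_β(u,v) < 0, then J(u,v) > c_β, where J(u,v) := ¼ ‖(u,v)‖²_{𝔥_α} = ¼(⟨(−Δ_α+ω)u,u⟩ + ‖∇v‖₂² + ω̃‖v‖₂²). -/

import Mathlib

open MeasureTheory Real Filter Topology

noncomputable section

/-- The plane `ℝ²`. -/
abbrev Plane : Type := EuclideanSpace ℝ (Fin 2)

/-- Squared `L²` norm `‖f‖₂²`. -/
noncomputable def L2sq (f : Plane → ℂ) : ℝ := ∫ x, ‖f x‖ ^ 2

/-- Squared `L²` norm of the gradient, `‖∇f‖₂²`. -/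
noncomputable def gradSq (f : Plane → ℂ) : ℝ := ∫ x, ‖fderiv ℝ f x‖ ^ 2

/-- Fourth power of the `L⁴` norm, `‖f‖₄⁴`. -/
noncomputable def L4q (f : Plane → ℂ) : ℝ := ∫ x, ‖f x‖ ^ 4

/-- The coupling integral `∫_{ℝ²} |uv|²`. -/
noncomputable def mixedInt (u v : Plane → ℂ) : ℝ := ∫ x, ‖u x‖ ^ 2 * ‖v x‖ ^ 2

/-- The Sobolev space `H¹(ℝ²)` (complex valued): `f` and its gradient are in `L²`. -/
def H1 : Set (Plane → ℂ) :=
  {f | MemLp f 2 volume ∧ MemLp (fun x => fderiv ℝ f x) 2 volume}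

/-- Squared `H¹` norm. -/
noncomputable def H1sq (f : Plane → ℂ) : ℝ := gradSq f + L2sq f

/-- `ω_α = 4 e^{-4πα - 2γ}`, the opposite of the unique negative eigenvalue of `-Δ_α`. -/
noncomputable def omegaAlpha (α : ℝ) : ℝ :=
  4 * Real.exp (-4 * Real.pi * α - 2 * Real.eulerMascheroniConstant)

/-- `θ_λ = (log(√λ/2) + γ)/(2π)`. -/
noncomputable def thetaLam (lam : ℝ) : ℝ :=
  (Real.log (Real.sqrt lam / 2) + Real.eulerMascheroniConstant) / (2 * Real.pi)

/-- The modified Bessel function `K₀`. -/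
noncomputable def besselK0 (r : ℝ) : ℝ := ∫ t in Set.Ioi (0 : ℝ), Real.exp (-r * Real.cosh t)

/-- The Green function `G_λ` of `-Δ + λ` on `ℝ²`, `G_λ(x) = (2π)⁻¹ K₀(√λ |x|)`. -/
noncomputable def Green (lam : ℝ) : Plane → ℂ :=
  fun x => ((1 / (2 * Real.pi)) * besselK0 (Real.sqrt lam * ‖x‖) : ℝ)

/-- The energy space `H¹_α(ℝ²)`, described through the decomposition `u = φ + q G_λ`. -/
def H1alpha (lam : ℝ) : Set (Plane → ℂ) :=
  {u | ∃ φ ∈ H1, ∃ q : ℂ, u = φ + q • Green lam}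

/-- The quadratic form `⟨(-Δ_α + ω)u, u⟩` of `u = φ + q G_λ`, expressed through the
decomposition data `(φ, q)`. -/
noncomputable def quadForm (α ω lam : ℝ) (φ : Plane → ℂ) (q : ℂ) : ℝ :=
  gradSq φ + lam * L2sq φ + (ω - lam) * L2sq (φ + q • Green lam)
    + (α + thetaLam lam) * ‖q‖ ^ 2

/-- The action functional `I_β(u,v)` for the system `(𝒫_β)`, on decomposed data
`u = φ + q G_λ`. -/
noncomputable def Ifun (α ω ωt β lam : ℝ) (φ : Plane → ℂ) (q : ℂ) (v : Plane → ℂ) : ℝ :=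
  (1 / 2) * (quadForm α ω lam φ q + gradSq v + ωt * L2sq v)
    - (1 / 4) * (L4q (φ + q • Green lam) + L4q v)
    - (β / 2) * mixedInt (φ + q • Green lam) v

/-- The Nehari functional `G_β(u,v)`. -/
noncomputable def Gfun (α ω ωt β lam : ℝ) (φ : Plane → ℂ) (q : ℂ) (v : Plane → ℂ) : ℝ :=
  quadForm α ω lam φ q + gradSq v + ωt * L2sq v
    - (L4q (φ + q • Green lam) + L4q v)
    - 2 * β * mixedInt (φ + q • Green lam) v

/-- Membership in the Nehari manifold `𝒩_β`, on decomposed data. -/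
def InNehari (α ω ωt β lam : ℝ) (φ : Plane → ℂ) (q : ℂ) (v : Plane → ℂ) : Prop :=
  φ ∈ H1 ∧ v ∈ H1 ∧ ¬(φ + q • Green lam = 0 ∧ v = 0) ∧ Gfun α ω ωt β lam φ q v = 0

/-- The ground state level `c_β = inf_{𝒩_β} I_β`. -/
noncomputable def clevel (α ω ωt β lam : ℝ) : ℝ :=
  sInf {r : ℝ | ∃ φ q v, InNehari α ω ωt β lam φ q v ∧ r = Ifun α ω ωt β lam φ q v}

/-- `(u,v) = (φ + q G_λ, v)` is a ground state of `(𝒫_β)`, i.e. a minimizer for `c_β`. -/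
def IsGroundState (α ω ωt β lam : ℝ) (φ : Plane → ℂ) (q : ℂ) (v : Plane → ℂ) : Prop :=
  InNehari α ω ωt β lam φ q v ∧ Ifun α ω ωt β lam φ q v = clevel α ω ωt β lam

/-- The action functional `I⁰_β(u,v)` without point interaction. -/
noncomputable def I0fun (ω ωt β : ℝ) (u v : Plane → ℂ) : ℝ :=
  (1 / 2) * (gradSq u + ω * L2sq u + gradSq v + ωt * L2sq v)
    - (1 / 4) * (L4q u + L4q v) - (β / 2) * mixedInt u v

/-- The Nehari functional `G⁰_β(u,v)` without point interaction. -/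
noncomputable def G0fun (ω ωt β : ℝ) (u v : Plane → ℂ) : ℝ :=
  gradSq u + ω * L2sq u + gradSq v + ωt * L2sq v
    - (L4q u + L4q v) - 2 * β * mixedInt u v

/-- Membership in the Nehari manifold `𝒩⁰_β`. -/
def InNehari0 (ω ωt β : ℝ) (u v : Plane → ℂ) : Prop :=
  u ∈ H1 ∧ v ∈ H1 ∧ ¬(u = 0 ∧ v = 0) ∧ G0fun ω ωt β u v = 0

/-- The ground state level `c⁰_β` without point interaction. -/
noncomputable def c0level (ω ωt β : ℝ) : ℝ :=
  sInf {r : ℝ | ∃ u v, InNehari0 ω ωt β u v ∧ r = I0fun ω ωt β u v}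

/-- The single-equation action `S_ω(u)` with point interaction. -/
noncomputable def Sfun (α ω lam : ℝ) (φ : Plane → ℂ) (q : ℂ) : ℝ :=
  (1 / 2) * quadForm α ω lam φ q - (1 / 4) * L4q (φ + q • Green lam)

/-- The single-equation ground state level `d(ω)` with point interaction. -/
noncomputable def dlevel (α ω lam : ℝ) : ℝ :=
  sInf {r : ℝ | ∃ φ ∈ H1, ∃ q : ℂ, φ + q • Green lam ≠ 0 ∧
    quadForm α ω lam φ q = L4q (φ + q • Green lam) ∧ r = Sfun α ω lam φ q}

/-- The single-equation ground state level `d⁰(ω̃)` without point interaction. -/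
noncomputable def d0level (ωt : ℝ) : ℝ :=
  sInf {r : ℝ | ∃ v ∈ H1, v ≠ 0 ∧ gradSq v + ωt * L2sq v = L4q v ∧
    r = (1 / 2) * (gradSq v + ωt * L2sq v) - (1 / 4) * L4q v}

/-- The limit action functional `Ĩ_∞(u,v)`. -/
noncomputable def IInf (α ω ωt lam : ℝ) (φ : Plane → ℂ) (q : ℂ) (v : Plane → ℂ) : ℝ :=
  (1 / 2) * (quadForm α ω lam φ q + gradSq v + ωt * L2sq v)
    - (1 / 2) * mixedInt (φ + q • Green lam) v

/-- The limit Nehari functional `G̃_∞(u,v)`. -/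
noncomputable def GInf (α ω ωt lam : ℝ) (φ : Plane → ℂ) (q : ℂ) (v : Plane → ℂ) : ℝ :=
  quadForm α ω lam φ q + gradSq v + ωt * L2sq v - 2 * mixedInt (φ + q • Green lam) v

/-- Membership in the limit Nehari manifold `𝒩̃_∞`. -/
def InNehariInf (α ω ωt lam : ℝ) (φ : Plane → ℂ) (q : ℂ) (v : Plane → ℂ) : Prop :=
  φ ∈ H1 ∧ v ∈ H1 ∧ ¬(φ + q • Green lam = 0 ∧ v = 0) ∧ GInf α ω ωt lam φ q v = 0

/-- The limit ground state level `c̃_∞`. -/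
noncomputable def cInf (α ω ωt lam : ℝ) : ℝ :=
  sInf {r : ℝ | ∃ φ q v, InNehariInf α ω ωt lam φ q v ∧ r = IInf α ω ωt lam φ q v}

/-- `(φ + q G_λ, v)` is a ground state of the limit problem `(𝒫̃_∞)`. -/
def IsGroundStateInf (α ω ωt lam : ℝ) (φ : Plane → ℂ) (q : ℂ) (v : Plane → ℂ) : Prop :=
  InNehariInf α ω ωt lam φ q v ∧ IInf α ω ωt lam φ q v = cInf α ω ωt lam


/-! ### Auxiliary lemmas -/

lemma aux_L2sq_nonneg (f : Plane → ℂ) : 0 ≤ L2sq f := integral_nonneg fun x => by positivity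
lemma aux_gradSq_nonneg (f : Plane → ℂ) : 0 ≤ gradSq f := integral_nonneg fun x => by positivity
lemma aux_L4q_nonneg (f : Plane → ℂ) : 0 ≤ L4q f := integral_nonneg fun x => by positivity
lemma aux_mixedInt_nonneg (u v : Plane → ℂ) : 0 ≤ mixedInt u v :=
  integral_nonneg fun x => by positivity

lemma aux_fderiv_smul (t : ℝ) (ht : t ≠ 0) (f : Plane → ℂ) (x : Plane) :
    fderiv ℝ (t • f) x = t • fderiv ℝ f x := by
  by_cases h : DifferentiableAt ℝ f x
  · exact fderiv_const_smul h t
  · have h2 : ¬ DifferentiableAt ℝ (t • f) x := by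
      intro hd
      have heq : (fun y => (t⁻¹ : ℝ) • (t • f) y) = f := by
        have htc : (t : ℂ) ≠ 0 := by exact_mod_cast ht
        funext y
        simp only [Pi.smul_apply, smul_eq_mul, Complex.real_smul, Complex.ofReal_inv]
        field_simp
      exact h (heq ▸ hd.const_smul (t⁻¹ : ℝ))
    rw [fderiv_zero_of_not_differentiableAt h, fderiv_zero_of_not_differentiableAt h2]
    ext y; simp

lemma aux_L2sq_smul (t : ℝ) (f : Plane → ℂ) : L2sq (t • f) = t ^ 2 * L2sq f := by
  unfold L2sq
  rw [← smul_eq_mul, ← integral_smul]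
  congr 1; funext x
  simp [norm_smul, mul_pow, sq_abs, smul_eq_mul]

lemma aux_L4q_smul (t : ℝ) (f : Plane → ℂ) : L4q (t • f) = t ^ 4 * L4q f := by
  unfold L4q
  rw [← smul_eq_mul, ← integral_smul]
  congr 1; funext x
  have h4 : |t| ^ 4 = t ^ 4 := by
    rw [← abs_pow, abs_of_nonneg (by positivity)]
  simp [norm_smul, mul_pow, h4, smul_eq_mul]

lemma aux_mixedInt_smul (t : ℝ) (u v : Plane → ℂ) :
    mixedInt (t • u) (t • v) = t ^ 4 * mixedInt u v := by
  unfold mixedInt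
  rw [← smul_eq_mul, ← integral_smul]
  congr 1; funext x
  simp only [Pi.smul_apply, norm_smul, mul_pow, Real.norm_eq_abs, sq_abs, smul_eq_mul]
  ring

lemma aux_gradSq_smul (t : ℝ) (ht : t ≠ 0) (f : Plane → ℂ) :
    gradSq (t • f) = t ^ 2 * gradSq f := by
  unfold gradSq
  rw [← smul_eq_mul, ← integral_smul]
  congr 1; funext x
  rw [aux_fderiv_smul t ht, smul_eq_mul]
  rw [norm_smul (β := Plane →L[ℝ] ℂ) t (fderiv ℝ f x), Real.norm_eq_abs, mul_pow, sq_abs]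

lemma aux_decomp (t : ℝ) (lam : ℝ) (φ : Plane → ℂ) (q : ℂ) :
    (t • φ) + (t • q) • Green lam = t • (φ + q • Green lam) := by
  funext x
  simp only [Pi.add_apply, Pi.smul_apply, smul_add, smul_assoc]

lemma aux_quadForm_smul (α ω lam t : ℝ) (ht : t ≠ 0) (φ : Plane → ℂ) (q : ℂ) :
    quadForm α ω lam (t • φ) (t • q) = t ^ 2 * quadForm α ω lam φ q := by
  unfold quadForm
  rw [aux_decomp, aux_gradSq_smul t ht, aux_L2sq_smul, aux_L2sq_smul, norm_smul,
    Real.norm_eq_abs, mul_pow, sq_abs]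
  ring

lemma aux_H1_smul (t : ℝ) (ht : t ≠ 0) {f : Plane → ℂ} (hf : f ∈ H1) : t • f ∈ H1 := by
  obtain ⟨h1, h2⟩ := hf
  refine ⟨h1.const_smul t, ?_⟩
  have heq : (fun x => fderiv ℝ (t • f) x) = fun x => t • fderiv ℝ f x :=
    funext fun x => aux_fderiv_smul t ht f x
  rw [heq]
  exact h2.const_smul t

lemma aux_theta_pos (α lam : ℝ) (h : omegaAlpha α < lam) : 0 < α + thetaLam lam := by
  have hπ : (0:ℝ) < Real.pi := Real.pi_pos
  set c := -2 * Real.pi * α - Real.eulerMascheroniConstant with hc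
  have hcc : c + c = -4 * Real.pi * α - 2 * Real.eulerMascheroniConstant := by rw [hc]; ring
  have he : Real.exp c ^ 2 = Real.exp (-4 * Real.pi * α - 2 * Real.eulerMascheroniConstant) := by
    rw [sq, ← Real.exp_add, hcc]
  have hω : omegaAlpha α = (2 * Real.exp c) ^ 2 := by
    rw [omegaAlpha, mul_pow, he]; norm_num
  have hsq : 2 * Real.exp c < Real.sqrt lam :=
    (Real.lt_sqrt (by positivity)).mpr (hω ▸ h)
  have hs0 : 0 < Real.sqrt lam := lt_trans (by positivity) hsq
  have hlog : c < Real.log (Real.sqrt lam / 2) := by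
    rw [Real.lt_log_iff_exp_lt (by positivity)]
    linarith
  have hval : (c + Real.eulerMascheroniConstant) / (2 * Real.pi) = -α := by
    rw [hc]
    field_simp
    ring
  have hdiv : (c + Real.eulerMascheroniConstant) / (2 * Real.pi) <
      (Real.log (Real.sqrt lam / 2) + Real.eulerMascheroniConstant) / (2 * Real.pi) := by
    gcongr
  rw [hval] at hdiv
  unfold thetaLam
  linarith

lemma aux_quadForm_nonneg (α ω lam : ℝ) (hlam1 : omegaAlpha α < lam) (hlam2 : lam ≤ ω)
    (φ : Plane → ℂ) (q : ℂ) : 0 ≤ quadForm α ω lam φ q := by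
  have hωα : 0 < omegaAlpha α := by rw [omegaAlpha]; positivity
  have hlam0 : 0 < lam := hωα.trans hlam1
  have hθ := aux_theta_pos α lam hlam1
  have h1 := aux_gradSq_nonneg φ
  have h2 := mul_nonneg hlam0.le (aux_L2sq_nonneg φ)
  have h3 := mul_nonneg (sub_nonneg.2 hlam2) (aux_L2sq_nonneg (φ + q • Green lam))
  have h4 := mul_nonneg hθ.le (sq_nonneg ‖q‖)
  unfold quadForm
  linarith

lemma aux_ae_zero_of_L2sq_zero {f : Plane → ℂ} (hf : MemLp f 2 volume) (h : L2sq f = 0) :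
    f =ᵐ[volume] 0 := by
  have hint : Integrable (fun x => ‖f x‖ ^ 2) volume := by
    have h2 := hf.integrable_norm_rpow (by norm_num) (by norm_num)
    simpa [Real.rpow_natCast] using h2
  have h0 := (integral_eq_zero_iff_of_nonneg (fun x => by positivity) hint).1 h
  filter_upwards [h0] with x hx
  simp only [Pi.zero_apply] at hx ⊢
  have : ‖f x‖ = 0 := by nlinarith [norm_nonneg (f x)]
  simpa using this

lemma aux_L4q_zero {f : Plane → ℂ} (h : f =ᵐ[volume] 0) : L4q f = 0 := by
  have heq : (fun x => ‖f x‖ ^ 4) =ᵐ[volume] (fun _ => (0:ℝ)) := by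
    filter_upwards [h] with x hx
    simp_all
  rw [L4q, integral_congr_ae heq, integral_zero]

lemma aux_mixed_zero {u v : Plane → ℂ} (h : u =ᵐ[volume] 0) : mixedInt u v = 0 := by
  have heq : (fun x => ‖u x‖ ^ 2 * ‖v x‖ ^ 2) =ᵐ[volume] (fun _ => (0:ℝ)) := by
    filter_upwards [h] with x hx
    simp_all
  rw [mixedInt, integral_congr_ae heq, integral_zero]

/-- Lemma `lemm17`. If `(u,v) = (φ + q G_λ, v) ∈ 𝔥_α \ {(0,0)}` and
`G_β(u,v) < 0`, then `J(u,v) = ¼‖(u,v)‖²_{𝔥_α} > c_β`. -/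
theorem J_gt_clevel_of_G_neg (α ω ωt β lam : ℝ)
    (hω : omegaAlpha α < ω) (hωt : 0 < ωt) (hβ : 0 ≤ β)
    (hlam1 : omegaAlpha α < lam) (hlam2 : lam ≤ ω)
    (φ : Plane → ℂ) (q : ℂ) (v : Plane → ℂ)
    (hφ : φ ∈ H1) (hv : v ∈ H1)
    (hne : ¬(φ + q • Green lam = 0 ∧ v = 0))
    (hG : Gfun α ω ωt β lam φ q v < 0) :
    clevel α ω ωt β lam <
      (1 / 4) * (quadForm α ω lam φ q + gradSq v + ωt * L2sq v) := by
  have hπ : (0:ℝ) < Real.pi := Real.pi_pos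
  have hωα : 0 < omegaAlpha α := by rw [omegaAlpha]; positivity
  have hlam0 : 0 < lam := hωα.trans hlam1
  have hθ := aux_theta_pos α lam hlam1
  -- abbreviations (purely notational, for readability of `have` statements below)
  have hGexp : Gfun α ω ωt β lam φ q v =
      (quadForm α ω lam φ q + gradSq v + ωt * L2sq v)
        - (L4q (φ + q • Green lam) + L4q v + 2 * β * mixedInt (φ + q • Green lam) v) := by
    unfold Gfun; ring
  have hQnonneg : 0 ≤ quadForm α ω lam φ q + gradSq v + ωt * L2sq v := by
    have h1 := aux_quadForm_nonneg α ω lam hlam1 hlam2 φ q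
    have h2 := aux_gradSq_nonneg v
    have h3 := mul_nonneg hωt.le (aux_L2sq_nonneg v)
    linarith
  -- positivity of Q
  have hQpos : 0 < quadForm α ω lam φ q + gradSq v + ωt * L2sq v := by
    rcases hQnonneg.lt_or_eq with h | h
    · exact h
    exfalso
    have h2 := aux_gradSq_nonneg v
    have h3 := mul_nonneg hωt.le (aux_L2sq_nonneg v)
    have h1 := aux_quadForm_nonneg α ω lam hlam1 hlam2 φ q
    have hquad0 : quadForm α ω lam φ q = 0 := by linarith
    have hL2v : L2sq v = 0 := by
      have hv2 : ωt * L2sq v = 0 := by linarith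
      rcases mul_eq_zero.1 hv2 with h' | h'
      · exact absurd h' hωt.ne'
      · exact h'
    have hterm : lam * L2sq φ = 0 ∧ (α + thetaLam lam) * ‖q‖ ^ 2 = 0 := by
      have k1 := aux_gradSq_nonneg φ
      have k2 := mul_nonneg hlam0.le (aux_L2sq_nonneg φ)
      have k3 := mul_nonneg (sub_nonneg.2 hlam2) (aux_L2sq_nonneg (φ + q • Green lam))
      have k4 := mul_nonneg hθ.le (sq_nonneg ‖q‖)
      unfold quadForm at hquad0
      constructor <;> linarith
    have hL2φ : L2sq φ = 0 := by
      rcases mul_eq_zero.1 hterm.1 with h' | h'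
      · exact absurd h' hlam0.ne'
      · exact h'
    have hq0 : q = 0 := by
      rcases mul_eq_zero.1 hterm.2 with h' | h'
      · exact absurd h' hθ.ne'
      · have : ‖q‖ = 0 := by nlinarith [norm_nonneg q]
        simpa using this
    have huφ : φ + q • Green lam = φ := by rw [hq0, zero_smul, add_zero]
    have hφ0 : φ =ᵐ[volume] 0 := aux_ae_zero_of_L2sq_zero hφ.1 hL2φ
    have hv0 : v =ᵐ[volume] 0 := aux_ae_zero_of_L2sq_zero hv.1 hL2v
    have e1 : L4q (φ + q • Green lam) = 0 := by rw [huφ]; exact aux_L4q_zero hφ0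
    have e2 : L4q v = 0 := aux_L4q_zero hv0
    have e3 : mixedInt (φ + q • Green lam) v = 0 := by
      rw [huφ]; exact aux_mixed_zero hφ0
    rw [hGexp, e1, e2, e3, ← h] at hG
    simp at hG
  have hQN : quadForm α ω lam φ q + gradSq v + ωt * L2sq v <
      L4q (φ + q • Green lam) + L4q v + 2 * β * mixedInt (φ + q • Green lam) v := by
    linarith
  have hNpos : 0 < L4q (φ + q • Green lam) + L4q v
      + 2 * β * mixedInt (φ + q • Green lam) v := lt_trans hQpos hQN
  -- the scaling parameter
  set t : ℝ := Real.sqrt ((quadForm α ω lam φ q + gradSq v + ωt * L2sq v) /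
      (L4q (φ + q • Green lam) + L4q v + 2 * β * mixedInt (φ + q • Green lam) v)) with htdef
  have ht : 0 < t := Real.sqrt_pos.2 (div_pos hQpos hNpos)
  have ht2 : t ^ 2 = (quadForm α ω lam φ q + gradSq v + ωt * L2sq v) /
      (L4q (φ + q • Green lam) + L4q v + 2 * β * mixedInt (φ + q • Green lam) v) :=
    Real.sq_sqrt (le_of_lt (div_pos hQpos hNpos))
  have hsN : t ^ 2 * (L4q (φ + q • Green lam) + L4q v
      + 2 * β * mixedInt (φ + q • Green lam) v)
      = quadForm α ω lam φ q + gradSq v + ωt * L2sq v := by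
    rw [ht2]; field_simp
  have hslt : t ^ 2 < 1 := by
    rw [ht2]; exact (div_lt_one hNpos).2 hQN
  -- scaled quantities
  have hGscale : Gfun α ω ωt β lam (t • φ) (t • q) (t • v)
      = t ^ 2 * (quadForm α ω lam φ q + gradSq v + ωt * L2sq v)
        - t ^ 4 * (L4q (φ + q • Green lam) + L4q v
          + 2 * β * mixedInt (φ + q • Green lam) v) := by
    unfold Gfun
    rw [aux_quadForm_smul α ω lam t ht.ne' φ q, aux_decomp, aux_gradSq_smul t ht.ne',
      aux_L2sq_smul, aux_L4q_smul, aux_L4q_smul, aux_mixedInt_smul]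
    ring
  have hIscale : Ifun α ω ωt β lam (t • φ) (t • q) (t • v)
      = (1 / 2) * (t ^ 2 * (quadForm α ω lam φ q + gradSq v + ωt * L2sq v))
        - (1 / 4) * (t ^ 4 * (L4q (φ + q • Green lam) + L4q v))
        - (β / 2) * (t ^ 4 * mixedInt (φ + q • Green lam) v) := by
    unfold Ifun
    rw [aux_quadForm_smul α ω lam t ht.ne' φ q, aux_decomp, aux_gradSq_smul t ht.ne',
      aux_L2sq_smul, aux_L4q_smul, aux_L4q_smul, aux_mixedInt_smul]
    ring
  have hG0 : Gfun α ω ωt β lam (t • φ) (t • q) (t • v) = 0 := by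
    rw [hGscale]
    linear_combination (- (t ^ 2)) * hsN
  -- membership in the Nehari constraint set
  have hmem : Ifun α ω ωt β lam (t • φ) (t • q) (t • v) ∈
      {r : ℝ | ∃ φ q v, InNehari α ω ωt β lam φ q v ∧ r = Ifun α ω ωt β lam φ q v} := by
    refine ⟨t • φ, t • q, t • v, ⟨aux_H1_smul t ht.ne' hφ, aux_H1_smul t ht.ne' hv, ?_, hG0⟩, rfl⟩
    rintro ⟨h1, h2⟩
    apply hne
    rw [aux_decomp] at h1
    constructor
    · funext x
      have hx := congrFun h1 x
      simp only [Pi.smul_apply, Pi.zero_apply, smul_eq_zero] at hx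
      simpa using hx.resolve_left ht.ne'
    · funext x
      have hx := congrFun h2 x
      simp only [Pi.smul_apply, Pi.zero_apply, smul_eq_zero] at hx
      simpa using hx.resolve_left ht.ne'
  have hbdd : BddBelow
      {r : ℝ | ∃ φ q v, InNehari α ω ωt β lam φ q v ∧ r = Ifun α ω ωt β lam φ q v} := by
    refine ⟨0, ?_⟩
    rintro r ⟨φ₁, q₁, v₁, ⟨_, _, _, hG1⟩, rfl⟩
    unfold Gfun at hG1
    unfold Ifun
    have k1 := aux_quadForm_nonneg α ω lam hlam1 hlam2 φ₁ q₁
    have k2 := aux_gradSq_nonneg v₁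
    have k3 := mul_nonneg hωt.le (aux_L2sq_nonneg v₁)
    linarith
  have hle : clevel α ω ωt β lam ≤ Ifun α ω ωt β lam (t • φ) (t • q) (t • v) :=
    csInf_le hbdd hmem
  have hlt : Ifun α ω ωt β lam (t • φ) (t • q) (t • v) <
      (1 / 4) * (quadForm α ω lam φ q + gradSq v + ωt * L2sq v) := by
    rw [hIscale]
    have hs2 : t ^ 2 * (t ^ 2 * (L4q (φ + q • Green lam) + L4q v
        + 2 * β * mixedInt (φ + q • Green lam) v))
        = t ^ 2 * (quadForm α ω lam φ q + gradSq v + ωt * L2sq v) := by rw [hsN]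
    nlinarith [mul_pos hQpos (sub_pos.2 hslt), mul_pos (mul_pos ht ht) hQpos]
  exact lt_of_le_of_lt hle hlt

end
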